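/- Let σ > 0 and define P̃_L(ω, σ) = (sinh²(σπ)/sinh(2σπ)) · cosh(2σ(ω − π))/cosh²(σ(ω − π)) for ω ∈ [0, 2π]. Then P̃_L(ω, σ) = (sinh²(σπ)/sinh(2σπ)) · (2 − 1/cosh²(σ(ω − π))); it attains its minimum over [0, 2π] at ω = π, with value Ã_L(σ) = sinh²(σπ)/sinh(2σπ), and its maximum at ω = 0 (and ω = 2π), with value B̃_L(σ) = (sinh²(σπ)/sinh(2σπ)) · (2 − 1/cosh²(σπ)). -/

import Mathlib

open Real

lemma lorentz_key (x : ℝ) :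
    Real.cosh (2 * x) / Real.cosh x ^ 2 = 2 - 1 / Real.cosh x ^ 2 := by
  have h : Real.cosh x ^ 2 ≠ 0 := by positivity
  have h2 := Real.cosh_sq x
  field_simp [Real.cosh_two_mul]
  nlinarith [Real.cosh_sq x, Real.cosh_two_mul x]

lemma lorentz_C_pos (σ : ℝ) (hσ : 0 < σ) :
    0 < Real.sinh (σ * π) ^ 2 / Real.sinh (2 * σ * π) := by
  have h1 : 0 < Real.sinh (σ * π) := Real.sinh_pos_iff.2 (by positivity)
  have h2 : 0 < Real.sinh (2 * σ * π) := Real.sinh_pos_iff.2 (by positivity)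
  positivity

/-- For `σ > 0`, the function
`P̃_L(ω,σ) = (sinh²(σπ)/sinh(2σπ))·cosh(2σ(ω−π))/cosh²(σ(ω−π))` on `[0, 2π]`
equals `(sinh²(σπ)/sinh(2σπ))·(2 − 1/cosh²(σ(ω−π)))`, attains its minimum at
`ω = π` with value `Ã_L(σ) = sinh²(σπ)/sinh(2σπ)`, and its maximum at `ω = 0`
(and `ω = 2π`) with value `B̃_L(σ) = (sinh²(σπ)/sinh(2σπ))·(2 − 1/cosh²(σπ))`. -/
theorem lorentz_nod_riesz_function (σ : ℝ) (hσ : 0 < σ) :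
    (∀ ω : ℝ,
      Real.sinh (σ * π) ^ 2 / Real.sinh (2 * σ * π) *
          (Real.cosh (2 * σ * (ω - π)) / Real.cosh (σ * (ω - π)) ^ 2) =
        Real.sinh (σ * π) ^ 2 / Real.sinh (2 * σ * π) *
          (2 - 1 / Real.cosh (σ * (ω - π)) ^ 2)) ∧
    (∀ ω ∈ Set.Icc (0 : ℝ) (2 * π),
      Real.sinh (σ * π) ^ 2 / Real.sinh (2 * σ * π) ≤
        Real.sinh (σ * π) ^ 2 / Real.sinh (2 * σ * π) *
          (Real.cosh (2 * σ * (ω - π)) / Real.cosh (σ * (ω - π)) ^ 2)) ∧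
    Real.sinh (σ * π) ^ 2 / Real.sinh (2 * σ * π) *
        (Real.cosh (2 * σ * (π - π)) / Real.cosh (σ * (π - π)) ^ 2) =
      Real.sinh (σ * π) ^ 2 / Real.sinh (2 * σ * π) ∧
    (∀ ω ∈ Set.Icc (0 : ℝ) (2 * π),
      Real.sinh (σ * π) ^ 2 / Real.sinh (2 * σ * π) *
          (Real.cosh (2 * σ * (ω - π)) / Real.cosh (σ * (ω - π)) ^ 2) ≤
        Real.sinh (σ * π) ^ 2 / Real.sinh (2 * σ * π) *
          (2 - 1 / Real.cosh (σ * π) ^ 2)) ∧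
    Real.sinh (σ * π) ^ 2 / Real.sinh (2 * σ * π) *
        (Real.cosh (2 * σ * (0 - π)) / Real.cosh (σ * (0 - π)) ^ 2) =
      Real.sinh (σ * π) ^ 2 / Real.sinh (2 * σ * π) *
        (2 - 1 / Real.cosh (σ * π) ^ 2) ∧
    Real.sinh (σ * π) ^ 2 / Real.sinh (2 * σ * π) *
        (Real.cosh (2 * σ * (2 * π - π)) / Real.cosh (σ * (2 * π - π)) ^ 2) =
      Real.sinh (σ * π) ^ 2 / Real.sinh (2 * σ * π) *
        (2 - 1 / Real.cosh (σ * π) ^ 2) := by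
  have hC := lorentz_C_pos σ hσ
  set C := Real.sinh (σ * π) ^ 2 / Real.sinh (2 * σ * π) with hCdef
  have key : ∀ ω : ℝ,
      C * (Real.cosh (2 * σ * (ω - π)) / Real.cosh (σ * (ω - π)) ^ 2) =
        C * (2 - 1 / Real.cosh (σ * (ω - π)) ^ 2) := by
    intro ω
    have : (2 : ℝ) * σ * (ω - π) = 2 * (σ * (ω - π)) := by ring
    rw [this, lorentz_key]
  refine ⟨key, ?_, ?_, ?_, ?_, ?_⟩
  · intro ω hω
    rw [key]
    have h1 : (1 : ℝ) ≤ Real.cosh (σ * (ω - π)) ^ 2 := by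
      have := Real.one_le_cosh (σ * (ω - π))
      nlinarith [Real.cosh_pos (σ * (ω - π))]
    have h2 : 1 / Real.cosh (σ * (ω - π)) ^ 2 ≤ 1 := by
      rw [div_le_one (by positivity)]; exact h1
    nlinarith
  · rw [key]
    simp [Real.cosh_zero]
    ring
  · intro ω hω
    rw [key]
    obtain ⟨h0, h2π⟩ := hω
    have habs : |σ * (ω - π)| ≤ σ * π := by
      rw [abs_mul, abs_of_pos hσ]
      have : |ω - π| ≤ π := by
        rw [abs_le]; constructor <;> linarith
      exact mul_le_mul_of_nonneg_left this hσ.le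
    have hc : Real.cosh (σ * (ω - π)) ≤ Real.cosh (σ * π) := by
      calc Real.cosh (σ * (ω - π)) = Real.cosh |σ * (ω - π)| := (Real.cosh_abs _).symm
        _ ≤ Real.cosh (σ * π) := by
            apply Real.cosh_le_cosh.2
            rw [abs_abs]
            calc |σ * (ω - π)| ≤ σ * π := habs
              _ ≤ |σ * π| := le_abs_self _
    have hcp := Real.cosh_pos (σ * (ω - π))
    have hcp2 := Real.cosh_pos (σ * π)
    have hsq : Real.cosh (σ * (ω - π)) ^ 2 ≤ Real.cosh (σ * π) ^ 2 := by nlinarith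
    have hinv : 1 / Real.cosh (σ * π) ^ 2 ≤ 1 / Real.cosh (σ * (ω - π)) ^ 2 :=
      one_div_le_one_div_of_le (by positivity) hsq
    nlinarith
  · rw [key]
    have : σ * ((0 : ℝ) - π) = -(σ * π) := by ring
    rw [this, Real.cosh_neg]
  · rw [key]
    have : σ * (2 * π - π) = σ * π := by ring
    rw [this]
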